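/- Let G be a countable group acting on a countable set S, and let H ≤ G be a subgroup such that for every finite subset S₀ ⊆ S the set {h ∈ H | (h • S₀) ∩ S₀ = ∅} is infinite. Let (Ω₀, ν₀) be a probability space, X = Π_{s ∈ S} Ω₀ with the product probability measure μ = ⨂_{s ∈ S} ν₀, and let σ be the generalized Bernoulli shift action of G on X given by (g • x)(s) = x(g⁻¹ • s). Then the restriction of σ to H is weakly mixing: the diagonal action of H on (X × X, μ ⊗ μ), h • (x,y) = (h • x, h • y), is ergodic. -/

import Mathlib

open MeasureTheory Filter Set MeasurableSpace
open scoped symmDiff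
set_option linter.unusedSectionVars false

section Boxes

variable {S : Type*} {Ω₀ : Type*} [MeasurableSpace Ω₀]

/-- A cylinder (box) set determined by coordinates in `t`. -/
def BernBox (t : Finset S) (A : S → Set Ω₀) : Set (S → Ω₀) := {x | ∀ s ∈ t, x s ∈ A s}

/-- The collection of boxes over a fixed finite coordinate set `t`. -/
def BernBoxes (t : Finset S) : Set (Set (S → Ω₀)) :=
  {C | ∃ A : S → Set Ω₀, (∀ s ∈ t, MeasurableSet (A s)) ∧ C = BernBox t A}

lemma bernBox_measurable {t : Finset S} {A : S → Set Ω₀}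
    (h : ∀ s ∈ t, MeasurableSet (A s)) : MeasurableSet (BernBox t A) := by
  have : BernBox t A = ⋂ s ∈ (t : Set S), (fun x : S → Ω₀ => x s) ⁻¹' A s := by
    ext x; simp [BernBox]
  rw [this]
  exact MeasurableSet.biInter t.countable_toSet
    (fun s hs => measurable_pi_apply s (h s hs))

lemma bernBox_mono {t t' : Finset S} (hsub : t ⊆ t') (A : S → Set Ω₀) [DecidableEq S]
    [∀ s, Decidable (s ∈ t)] :
    BernBox t A = BernBox t' (fun s => if s ∈ t then A s else Set.univ) := by
  ext x
  simp only [BernBox, Set.mem_setOf_eq]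
  constructor
  · intro h s hs'
    by_cases hs : s ∈ t <;> simp [hs, h s]
  · intro h s hs
    have := h s (hsub hs)
    simpa [hs] using this

lemma bernBoxes_mono {t t' : Finset S} (hsub : t ⊆ t') :
    BernBoxes (Ω₀ := Ω₀) t ⊆ BernBoxes t' := by
  classical
  rintro C ⟨A, hA, rfl⟩
  refine ⟨fun s => if s ∈ t then A s else Set.univ, fun s hs => ?_, bernBox_mono hsub A⟩
  by_cases h : s ∈ t <;> simp [h, hA s]

lemma bernBox_inter_same {t : Finset S} (A A' : S → Set Ω₀) :
    BernBox t A ∩ BernBox t A' = BernBox t (fun s => A s ∩ A' s) := by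
  ext x
  simp only [BernBox, Set.mem_inter_iff, Set.mem_setOf_eq]
  constructor
  · rintro ⟨h₁, h₂⟩ s hs; exact ⟨h₁ s hs, h₂ s hs⟩
  · intro h; exact ⟨fun s hs => (h s hs).1, fun s hs => (h s hs).2⟩

lemma isPiSystem_bernBoxes (t : Finset S) : IsPiSystem (BernBoxes (Ω₀ := Ω₀) t) := by
  rintro C₁ ⟨A₁, h₁, rfl⟩ C₂ ⟨A₂, h₂, rfl⟩ -
  exact ⟨fun s => A₁ s ∩ A₂ s, fun s hs => (h₁ s hs).inter (h₂ s hs),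
    bernBox_inter_same A₁ A₂⟩

lemma bernBox_inter [DecidableEq S] {t₁ t₂ : Finset S} (A₁ A₂ : S → Set Ω₀)
    [∀ s, Decidable (s ∈ t₁)] [∀ s, Decidable (s ∈ t₂)] :
    BernBox t₁ A₁ ∩ BernBox t₂ A₂ = BernBox (t₁ ∪ t₂)
      (fun s => (if s ∈ t₁ then A₁ s else Set.univ) ∩ (if s ∈ t₂ then A₂ s else Set.univ)) := by
  ext x
  simp only [BernBox, Set.mem_inter_iff, Set.mem_setOf_eq, Finset.mem_union]
  constructor
  · rintro ⟨h₁, h₂⟩ s _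
    constructor
    · by_cases hs : s ∈ t₁ <;> simp [hs, h₁ s]
    · by_cases hs : s ∈ t₂ <;> simp [hs, h₂ s]
  · intro h
    constructor
    · intro s hs
      have := (h s (Or.inl hs)).1
      simpa [hs] using this
    · intro s hs
      have := (h s (Or.inr hs)).2
      simpa [hs] using this

/-- All boxes, over all finite coordinate sets. -/
def BernAllBoxes : Set (Set (S → Ω₀)) := {C | ∃ t : Finset S, C ∈ BernBoxes t}

lemma isPiSystem_bernAllBoxes : IsPiSystem (BernAllBoxes (S := S) (Ω₀ := Ω₀)) := by
  classical
  rintro C₁ ⟨t₁, A₁, h₁, rfl⟩ C₂ ⟨t₂, A₂, h₂, rfl⟩ -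
  refine ⟨t₁ ∪ t₂, fun s => (if s ∈ t₁ then A₁ s else Set.univ) ∩
    (if s ∈ t₂ then A₂ s else Set.univ), fun s _ => ?_, bernBox_inter A₁ A₂⟩
  refine MeasurableSet.inter ?_ ?_
  · by_cases h : s ∈ t₁ <;> simp [h, h₁ s]
  · by_cases h : s ∈ t₂ <;> simp [h, h₂ s]

lemma generateFrom_bernAllBoxes [Countable S] :
    generateFrom (BernAllBoxes (S := S) (Ω₀ := Ω₀)) = MeasurableSpace.pi := by
  refine le_antisymm (generateFrom_le ?_) ?_
  · rintro C ⟨t, A, hA, rfl⟩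
    exact bernBox_measurable hA
  · refine iSup_le fun s => ?_
    intro C hC
    obtain ⟨E, hE, rfl⟩ := hC
    have : (fun x : S → Ω₀ => x s) ⁻¹' E = BernBox {s} (fun _ => E) := by
      ext x; simp [BernBox]
    rw [this]
    exact measurableSet_generateFrom ⟨{s}, fun _ => E, fun _ _ => hE, rfl⟩

end Boxes

section Shift

variable {G S : Type*} [Group G] [MulAction G S] {Ω₀ : Type*}

/-- The generalized Bernoulli shift. -/
def bernShift (g : G) (x : S → Ω₀) : S → Ω₀ := fun s => x (g⁻¹ • s)

lemma bernShift_comp (g₁ g₂ : G) (x : S → Ω₀) :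
    bernShift g₁ (bernShift g₂ x) = bernShift (Ω₀ := Ω₀) (g₁ * g₂) x := by
  funext s
  show x (g₂⁻¹ • g₁⁻¹ • s) = x ((g₁ * g₂)⁻¹ • s)
  rw [mul_inv_rev, mul_smul]

lemma bernShift_one (x : S → Ω₀) : bernShift (1 : G) x = x := by
  funext s; show x ((1 : G)⁻¹ • s) = x s; rw [inv_one, one_smul]

lemma bernShift_leftInverse (g : G) :
    Function.LeftInverse (bernShift (Ω₀ := Ω₀) (S := S) g⁻¹) (bernShift g) := fun x => by
  rw [bernShift_comp, inv_mul_cancel, bernShift_one]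

lemma bernShift_rightInverse (g : G) :
    Function.RightInverse (bernShift (Ω₀ := Ω₀) (S := S) g⁻¹) (bernShift g) := fun x => by
  rw [bernShift_comp, mul_inv_cancel, bernShift_one]

lemma bernShift_image (g : G) (B : Set (S → Ω₀)) :
    bernShift g '' B = bernShift g⁻¹ ⁻¹' B := by
  rw [Set.image_eq_preimage_of_inverse (bernShift_leftInverse g) (bernShift_rightInverse g)]

lemma bernShift_measurable [MeasurableSpace Ω₀] (g : G) :
    Measurable (bernShift (Ω₀ := Ω₀) (S := S) g) :=
  measurable_pi_lambda _ fun s => measurable_pi_apply _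

lemma bernShift_preimage_box [DecidableEq S] (g : G) (t : Finset S) (B : S → Set Ω₀) :
    bernShift g ⁻¹' BernBox t B
      = BernBox (t.image (fun s => g⁻¹ • s)) (fun s => B (g • s)) := by
  ext x
  simp only [BernBox, Set.mem_preimage, Set.mem_setOf_eq, Finset.mem_image, bernShift]
  constructor
  · rintro h s' ⟨s, hs, rfl⟩
    rw [smul_inv_smul]
    exact h s hs
  · intro h s hs
    have := h (g⁻¹ • s) ⟨s, hs, rfl⟩
    rwa [smul_inv_smul] at this

end Shift

section Core

open ProbabilityTheory

theorem bern_core {G S : Type*} [Group G] [Countable S] [MulAction G S]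
    (H : Subgroup G)
    (hprop : ∀ S₀ : Finset S, ∃ h, h ∈ H ∧ ∀ s ∈ S₀, h • s ∉ S₀)
    {Ω₀ : Type*} [MeasurableSpace Ω₀] (ν₀ : Measure Ω₀) [IsProbabilityMeasure ν₀]
    (μ : Measure (S → Ω₀)) [IsProbabilityMeasure μ]
    (hμ : ∀ (t : Finset S) (A : S → Set Ω₀), (∀ s ∈ t, MeasurableSet (A s)) →
      μ {x : S → Ω₀ | ∀ s ∈ t, x s ∈ A s} = ∏ s ∈ t, ν₀ (A s)) :
    ∀ A : Set (S → Ω₀), MeasurableSet A →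
      (∀ h ∈ H, μ (((fun x : S → Ω₀ => fun s : S => x (h⁻¹ • s)) '' A) ∆ A) = 0) →
      μ A = 0 ∨ μ A = 1 := by
  classical
  intro A hA hinv
  have hbox : ∀ (t : Finset S) (B : S → Set Ω₀), (∀ s ∈ t, MeasurableSet (B s)) →
      μ (BernBox t B) = ∏ s ∈ t, ν₀ (B s) := fun t B h => hμ t B h
  -- the shift is measure preserving
  have hTpres : ∀ g : G, MeasurePreserving (bernShift g) μ μ := by
    intro g
    refine ⟨bernShift_measurable g, ?_⟩
    haveI : IsProbabilityMeasure (μ.map (bernShift (Ω₀ := Ω₀) (S := S) g)) :=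
      Measure.isProbabilityMeasure_map (bernShift_measurable g).aemeasurable
    refine ext_of_generate_finite BernAllBoxes generateFrom_bernAllBoxes.symm
      isPiSystem_bernAllBoxes ?_ (by simp)
    rintro C ⟨t, B, hB, rfl⟩
    rw [Measure.map_apply (bernShift_measurable g) (bernBox_measurable hB),
      bernShift_preimage_box]
    have hmeas : ∀ s' ∈ t.image (fun s => g⁻¹ • s), MeasurableSet (B (g • s')) := by
      intro s' hs'
      obtain ⟨s, hs, rfl⟩ := Finset.mem_image.mp hs'
      rw [smul_inv_smul]; exact hB s hs
    rw [hbox _ _ hmeas, hbox t B hB]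
    rw [Finset.prod_image (fun a _ b _ hab => by
      have := congrArg (fun z => g • z) hab
      simpa [smul_inv_smul] using this)]
    exact Finset.prod_congr rfl fun s _ => by rw [smul_inv_smul]
  -- the σ-algebras generated by boxes over fixed coordinate sets
  have h𝓕le : ∀ t : Finset S,
      generateFrom (BernBoxes (Ω₀ := Ω₀) t) ≤ (inferInstance : MeasurableSpace (S → Ω₀)) :=
    fun t => generateFrom_le (by rintro C ⟨B, hB, rfl⟩; exact bernBox_measurable hB)
  have h𝓕mono : ∀ {t t' : Finset S}, t ⊆ t' →
      generateFrom (BernBoxes (Ω₀ := Ω₀) t) ≤ generateFrom (BernBoxes t') := fun h =>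
    generateFrom_mono (bernBoxes_mono h)
  -- independence over disjoint coordinate sets
  have hindep : ∀ {t₁ t₂ : Finset S}, Disjoint t₁ t₂ →
      ∀ B₁ B₂ : Set (S → Ω₀), MeasurableSet[generateFrom (BernBoxes t₁)] B₁ →
      MeasurableSet[generateFrom (BernBoxes t₂)] B₂ →
      μ (B₁ ∩ B₂) = μ B₁ * μ B₂ := by
    intro t₁ t₂ hd B₁ B₂ h₁ h₂
    have hind : Indep (generateFrom (BernBoxes t₁)) (generateFrom (BernBoxes t₂)) μ := by
      refine IndepSets.indep (h𝓕le t₁) (h𝓕le t₂)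
        (isPiSystem_bernBoxes t₁) (isPiSystem_bernBoxes t₂) rfl rfl ?_
      rw [IndepSets_iff]
      rintro C₁ C₂ ⟨A₁, hA₁, rfl⟩ ⟨A₂, hA₂, rfl⟩
      have hmeas : ∀ s ∈ t₁ ∪ t₂, MeasurableSet
          ((if s ∈ t₁ then A₁ s else Set.univ) ∩ (if s ∈ t₂ then A₂ s else Set.univ)) := by
        intro s _
        refine MeasurableSet.inter ?_ ?_
        · split_ifs with h; exacts [hA₁ s h, MeasurableSet.univ]
        · split_ifs with h; exacts [hA₂ s h, MeasurableSet.univ]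
      rw [bernBox_inter A₁ A₂, hbox _ _ hmeas, hbox t₁ A₁ hA₁, hbox t₂ A₂ hA₂,
        Finset.prod_union hd]
      congr 1
      · refine Finset.prod_congr rfl fun s hs => ?_
        have hs₂ : s ∉ t₂ := Finset.disjoint_left.mp hd hs
        simp [hs, hs₂]
      · refine Finset.prod_congr rfl fun s hs => ?_
        have hs₁ : s ∉ t₁ := Finset.disjoint_right.mp hd hs
        simp [hs, hs₁]
    exact (Indep_iff _ _ _).mp hind B₁ B₂ h₁ h₂
  -- the algebra of sets depending on finitely many coordinates is measure-dense
  have halg : IsSetAlgebra {B : Set (S → Ω₀) |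
      ∃ t : Finset S, MeasurableSet[generateFrom (BernBoxes t)] B} := by
    refine ⟨⟨∅, @MeasurableSet.empty _ (generateFrom (BernBoxes (∅ : Finset S)))⟩, ?_, ?_⟩
    · rintro B ⟨t, hB⟩; exact ⟨t, hB.compl⟩
    · rintro B₁ B₂ ⟨t₁, h₁⟩ ⟨t₂, h₂⟩
      exact ⟨t₁ ∪ t₂, MeasurableSet.union
        (h𝓕mono Finset.subset_union_left _ h₁)
        (h𝓕mono Finset.subset_union_right _ h₂)⟩
  have hgen𝒜 : (inferInstance : MeasurableSpace (S → Ω₀)) = generateFrom {B : Set (S → Ω₀) |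
      ∃ t : Finset S, MeasurableSet[generateFrom (BernBoxes t)] B} := by
    refine le_antisymm ?_ (generateFrom_le ?_)
    · rw [show (inferInstance : MeasurableSpace (S → Ω₀)) = MeasurableSpace.pi from rfl,
        ← generateFrom_bernAllBoxes (S := S) (Ω₀ := Ω₀)]
      refine generateFrom_mono ?_
      rintro C ⟨t, B, hB, rfl⟩
      exact ⟨t, measurableSet_generateFrom ⟨B, hB, rfl⟩⟩
    · rintro B ⟨t, hB⟩
      exact h𝓕le t _ hB
  have hdense := Measure.MeasureDense.of_generateFrom_isSetAlgebra_finite (μ := μ) halg hgen𝒜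
  -- preimages under the shift
  have hpre : ∀ (g : G) (t : Finset S) (B : Set (S → Ω₀)),
      MeasurableSet[generateFrom (BernBoxes t)] B →
      MeasurableSet[generateFrom (BernBoxes (t.image (fun s => g⁻¹ • s)))]
        (bernShift g ⁻¹' B) := by
    intro g t B hB
    have hm : @Measurable (S → Ω₀) (S → Ω₀) (generateFrom (BernBoxes (t.image (fun s => g⁻¹ • s))))
        (generateFrom (BernBoxes t)) (bernShift g) := by
      refine @measurable_generateFrom _ _ (generateFrom (BernBoxes (t.image (fun s => g⁻¹ • s)))) _ _ ?_
      rintro C ⟨B', hB', rfl⟩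
      rw [bernShift_preimage_box]
      refine measurableSet_generateFrom ⟨fun s => B' (g • s), ?_, rfl⟩
      intro s' hs'
      obtain ⟨s, hs, rfl⟩ := Finset.mem_image.mp hs'
      simpa [smul_inv_smul] using hB' s hs
    exact hm hB
  -- main estimate
  have key : ∀ ε : ℝ, 0 < ε →
      |(μ A).toReal - (μ A).toReal * (μ A).toReal| ≤ 4 * ε := by
    intro ε hε
    obtain ⟨B, hB𝒜, hABε⟩ := hdense.approx A hA (measure_ne_top μ A) ε hε
    obtain ⟨t, hBt⟩ := hB𝒜
    have hB : MeasurableSet B := h𝓕le t _ hBt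
    obtain ⟨h, hH, hmove⟩ := hprop t
    set TA := bernShift h ⁻¹' A with hTAdef
    set TB := bernShift h ⁻¹' B with hTBdef
    have hTAmeas : MeasurableSet TA := bernShift_measurable h hA
    have hTBmeas : MeasurableSet TB := bernShift_measurable h hB
    have hdisj : Disjoint t (t.image fun s => h⁻¹ • s) := by
      rw [Finset.disjoint_left]
      intro s hs hs'
      obtain ⟨s₀, hs₀, heq⟩ := Finset.mem_image.mp hs'
      apply hmove s hs
      rw [← heq, smul_inv_smul]
      exact hs₀
    have hBTB : μ (B ∩ TB) = μ B * μ TB := hindep hdisj B TB hBt (hpre h t B hBt)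
    -- invariance
    have h0 : μ ((bernShift h⁻¹ '' A) ∆ A) = 0 := hinv h⁻¹ (inv_mem hH)
    rw [bernShift_image, inv_inv] at h0
    have hTAae : TA =ᵐ[μ] A := measure_symmDiff_eq_zero_iff.mp h0
    have hμATA : μ (A ∩ TA) = μ A := by
      have h1 : (A ∩ TA : Set (S → Ω₀)) =ᵐ[μ] (A ∩ A : Set (S → Ω₀)) :=
        Filter.EventuallyEq.inter (Filter.EventuallyEq.refl _ _) hTAae
      rw [Set.inter_self] at h1
      exact measure_congr h1
    have hμTB : μ TB = μ B := (hTpres h).measure_preimage hB.nullMeasurableSet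
    have hTABsymm : μ (TA ∆ TB) = μ (A ∆ B) := by
      rw [hTAdef, hTBdef, ← Set.preimage_symmDiff]
      exact (hTpres h).measure_preimage (hA.symmDiff hB).nullMeasurableSet
    -- real-number estimates
    set a := (μ A).toReal with ha
    set b := (μ B).toReal with hb
    set d := (μ (A ∆ B)).toReal with hd
    have hd0 : 0 ≤ d := ENNReal.toReal_nonneg
    have hdε : d < ε := by
      rw [hd]
      exact (ENNReal.lt_ofReal_iff_toReal_lt (measure_ne_top _ _)).mp hABε
    have e1 : |a - b| ≤ d :=
      abs_measureReal_sub_le_measureReal_symmDiff hA.nullMeasurableSet hB.nullMeasurableSet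
    have e2 : |(μ (A ∩ TA)).toReal - (μ (B ∩ TB)).toReal|
        ≤ (μ ((A ∩ TA) ∆ (B ∩ TB))).toReal :=
      abs_measureReal_sub_le_measureReal_symmDiff (hA.inter hTAmeas).nullMeasurableSet
        (hB.inter hTBmeas).nullMeasurableSet
    have e3 : (A ∩ TA) ∆ (B ∩ TB) ⊆ (A ∆ B) ∪ (TA ∆ TB) := by
      intro x hx
      simp only [Set.mem_symmDiff, Set.mem_union, Set.mem_inter_iff] at hx ⊢
      tauto
    have e4 : (μ ((A ∩ TA) ∆ (B ∩ TB))).toReal ≤ d + d := by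
      have hle : μ ((A ∩ TA) ∆ (B ∩ TB)) ≤ μ (A ∆ B) + μ (TA ∆ TB) :=
        (measure_mono e3).trans (measure_union_le _ _)
      have := ENNReal.toReal_mono
        (ENNReal.add_ne_top.mpr ⟨measure_ne_top _ _, measure_ne_top _ _⟩) hle
      rw [ENNReal.toReal_add (measure_ne_top _ _) (measure_ne_top _ _), hTABsymm] at this
      exact this
    have e5 : |a - b * b| ≤ d + d := by
      have : (μ (A ∩ TA)).toReal = a := by rw [hμATA]
      have hbb : (μ (B ∩ TB)).toReal = b * b := by
        rw [hBTB, hμTB, ENNReal.toReal_mul]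
      rw [this, hbb] at e2
      exact e2.trans e4
    have hb1 : b ≤ 1 := by
      rw [hb]
      exact ENNReal.toReal_le_of_le_ofReal zero_le_one (by simpa using prob_le_one)
    have ha1 : a ≤ 1 := by
      rw [ha]
      exact ENNReal.toReal_le_of_le_ofReal zero_le_one (by simpa using prob_le_one)
    have hb0 : 0 ≤ b := ENNReal.toReal_nonneg
    have ha0 : 0 ≤ a := ENNReal.toReal_nonneg
    have h6 : |b * b - a * a| = |b - a| * |b + a| := by
      rw [← abs_mul]; ring_nf
    have h7 : |b + a| ≤ 2 := by
      rw [abs_of_nonneg (by linarith)]; linarith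
    have h8 : |b - a| ≤ d := by rw [abs_sub_comm]; exact e1
    have h9 : |b * b - a * a| ≤ d * 2 := by
      rw [h6]
      exact mul_le_mul h8 h7 (abs_nonneg _) hd0
    have h10 : |a - a * a| ≤ |a - b * b| + |b * b - a * a| := abs_sub_le _ _ _
    linarith
  -- conclude
  have heq : (μ A).toReal = (μ A).toReal * (μ A).toReal := by
    have h0 : |(μ A).toReal - (μ A).toReal * (μ A).toReal| ≤ 0 := by
      by_contra hlt
      push_neg at hlt
      have := key (|(μ A).toReal - (μ A).toReal * (μ A).toReal| / 8) (by linarith)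
      linarith
    have h1 : |(μ A).toReal - (μ A).toReal * (μ A).toReal| = 0 :=
      le_antisymm h0 (abs_nonneg _)
    have := abs_eq_zero.mp h1
    linarith
  have hcase : (μ A).toReal = 0 ∨ (μ A).toReal = 1 := by
    have h' : (μ A).toReal * (1 - (μ A).toReal) = 0 := by linear_combination heq
    rcases mul_eq_zero.mp h' with h | h
    · exact Or.inl h
    · exact Or.inr (by linarith)
  rcases hcase with h | h
  · exact Or.inl (((ENNReal.toReal_eq_zero_iff _).mp h).resolve_right (measure_ne_top μ A))
  · exact Or.inr ((ENNReal.toReal_eq_one_iff _).mp h)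

end Core

/-- If `H ≤ G` is a subgroup such that for every finite `S₀ ⊆ S` infinitely many `h ∈ H` move
`S₀` off itself, then the restriction to `H` of the generalized Bernoulli shift action of `G`
on `(Π_{s ∈ S} Ω₀, ⨂_{s ∈ S} ν₀)` is weakly mixing: the diagonal `H`-action on the square is
ergodic. The product measure `μ` is specified by its values on cylinder sets. -/
theorem stmt17 {G S : Type*} [Group G] [Countable G] [Countable S] [MulAction G S]
    (H : Subgroup G)
    (hprop : ∀ S₀ : Finset S, {h : G | h ∈ H ∧ ∀ s ∈ S₀, h • s ∉ S₀}.Infinite)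
    {Ω₀ : Type*} [MeasurableSpace Ω₀] (ν₀ : Measure Ω₀) [IsProbabilityMeasure ν₀]
    (μ : Measure (S → Ω₀)) [IsProbabilityMeasure μ]
    (hμ : ∀ (t : Finset S) (A : S → Set Ω₀), (∀ s ∈ t, MeasurableSet (A s)) →
      μ {x : S → Ω₀ | ∀ s ∈ t, x s ∈ A s} = ∏ s ∈ t, ν₀ (A s)) :
    ∀ A : Set ((S → Ω₀) × (S → Ω₀)), MeasurableSet A →
      (∀ h ∈ H, (μ.prod μ)
        (((fun p : (S → Ω₀) × (S → Ω₀) =>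
          (fun s : S => p.1 (h⁻¹ • s), fun s : S => p.2 (h⁻¹ • s))) '' A) ∆ A) = 0) →
      (μ.prod μ) A = 0 ∨ (μ.prod μ) A = 1 := by
  classical
  intro A hA hinv
  letI : MulAction G (S ⊕ S) :=
    { smul := fun g => Sum.map (fun s => g • s) (fun s => g • s)
      one_smul := by rintro (s | s) <;> show Sum.map _ _ _ = _ <;> simp
      mul_smul := by rintro g₁ g₂ (s | s) <;> show Sum.map _ _ _ = _ <;> simp [mul_smul] }
  have hprop' : ∀ t : Finset (S ⊕ S), ∃ h, h ∈ H ∧ ∀ i ∈ t, h • i ∉ t := by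
    intro t
    obtain ⟨h, hH, hmove⟩ := (hprop (t.toLeft ∪ t.toRight)).nonempty
    refine ⟨h, hH, ?_⟩
    rintro (s | s) hi hmem
    · exact hmove s (Finset.mem_union_left _ (Finset.mem_toLeft.mpr hi))
        (Finset.mem_union_left _ (Finset.mem_toLeft.mpr hmem))
    · exact hmove s (Finset.mem_union_right _ (Finset.mem_toRight.mpr hi))
        (Finset.mem_union_right _ (Finset.mem_toRight.mpr hmem))
  set e : ((i : S ⊕ S) → Ω₀) ≃ᵐ (S → Ω₀) × (S → Ω₀) :=
    MeasurableEquiv.sumPiEquivProdPi (fun _ : S ⊕ S => Ω₀) with he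
  set μ' : Measure ((i : S ⊕ S) → Ω₀) := (μ.prod μ).map e.symm with hμ'def
  haveI : IsProbabilityMeasure μ' :=
    Measure.isProbabilityMeasure_map e.symm.measurable.aemeasurable
  have hback : ∀ Z : Set ((S → Ω₀) × (S → Ω₀)), (⇑e.symm) ⁻¹' ((⇑e) ⁻¹' Z) = Z := by
    intro Z; ext p; simp
  have hμ' : ∀ (t : Finset (S ⊕ S)) (B : (S ⊕ S) → Set Ω₀),
      (∀ i ∈ t, MeasurableSet (B i)) →
      μ' {y : (i : S ⊕ S) → Ω₀ | ∀ i ∈ t, y i ∈ B i} = ∏ i ∈ t, ν₀ (B i) := by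
    intro t B hB
    rw [hμ'def, MeasurableEquiv.map_apply]
    have hset : (⇑e.symm) ⁻¹' {y : (i : S ⊕ S) → Ω₀ | ∀ i ∈ t, y i ∈ B i} =
        {x : S → Ω₀ | ∀ s ∈ t.toLeft, x s ∈ B (Sum.inl s)} ×ˢ
        {x : S → Ω₀ | ∀ s ∈ t.toRight, x s ∈ B (Sum.inr s)} := by
      ext p
      simp only [Set.mem_preimage, Set.mem_setOf_eq, Set.mem_prod, he,
        MeasurableEquiv.coe_sumPiEquivProdPi_symm, Equiv.sumPiEquivProdPi_symm_apply,
        Finset.mem_toLeft, Finset.mem_toRight]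
      constructor
      · intro hp
        exact ⟨fun s hs => hp (Sum.inl s) hs, fun s hs => hp (Sum.inr s) hs⟩
      · rintro ⟨h1, h2⟩ (s | s) hi
        · exact h1 s hi
        · exact h2 s hi
    rw [hset, Measure.prod_prod,
      hμ t.toLeft _ (fun s hs => hB _ (Finset.mem_toLeft.mp hs)),
      hμ t.toRight _ (fun s hs => hB _ (Finset.mem_toRight.mp hs))]
    rw [show (∏ i ∈ t, ν₀ (B i)) = (∏ s ∈ t.toLeft, ν₀ (B (Sum.inl s))) *
        ∏ s ∈ t.toRight, ν₀ (B (Sum.inr s)) by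
      conv_lhs => rw [← Finset.toLeft_disjSum_toRight (u := t)]
      rw [Finset.prod_disjSum]]
  -- the diagonal map on the square
  set Fm : G → ((S → Ω₀) × (S → Ω₀)) → ((S → Ω₀) × (S → Ω₀)) :=
    fun g p => (fun s : S => p.1 (g⁻¹ • s), fun s : S => p.2 (g⁻¹ • s)) with hFm
  have hFinv : ∀ (g : G) (p : (S → Ω₀) × (S → Ω₀)), Fm g (Fm g⁻¹ p) = p := by
    intro g p
    refine Prod.ext ?_ ?_ <;> funext s <;> simp [hFm, smul_inv_smul]
  have hFimg : ∀ (g : G) (Z : Set ((S → Ω₀) × (S → Ω₀))), Fm g '' Z = Fm g⁻¹ ⁻¹' Z := by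
    intro g Z
    have h1 : Function.LeftInverse (Fm g⁻¹) (Fm g) := fun p => by
      have := hFinv g⁻¹ p; rwa [inv_inv] at this
    have h2 : Function.RightInverse (Fm g⁻¹) (Fm g) := fun p => hFinv g p
    exact congrFun (Set.image_eq_preimage_of_inverse h1 h2) Z
  have hcomm : ∀ (g : G) (y : (i : S ⊕ S) → Ω₀), e (bernShift g y) = Fm g (e y) := by
    intro g y; rfl
  have hcore := bern_core (G := G) (S := S ⊕ S) H hprop' ν₀ μ' hμ'
    ((⇑e) ⁻¹' A) (e.measurable hA) ?_
  · rcases hcore with h | h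
    · left
      rwa [hμ'def, MeasurableEquiv.map_apply, hback] at h
    · right
      rwa [hμ'def, MeasurableEquiv.map_apply, hback] at h
  · intro h hH
    show μ' ((bernShift h '' ((⇑e) ⁻¹' A)) ∆ ((⇑e) ⁻¹' A)) = 0
    have him : bernShift h '' ((⇑e) ⁻¹' A) = (⇑e) ⁻¹' (Fm h '' A) := by
      rw [bernShift_image, hFimg]
      ext y
      simp only [Set.mem_preimage]
      rw [← hcomm]
    rw [him, ← Set.preimage_symmDiff, hμ'def, MeasurableEquiv.map_apply, hback]
    exact hinv h hH
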